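/- Let f₁ and f₂ be nonconstant maps in C(Σ, M). Then there exist ε₁ > 0 and ε₂ > 0 and a compact subset K of ℂ not containing 0 such that the set { a ∈ ℂ : a ≠ 0 and there exists h ∈ C(Σ, M) with d(h, f₁) < ε₁ and d(h ∘ g_a, f₂) < ε₂ } is contained in K; in particular this set is precompact in ℂ \ {0}. (Equivalent reformulation (A) of the main properness theorem: the projection to the group of the preimage of a product neighborhood under the total action map is precompact.) -/

import Mathlib

open OnePoint Topology

/-- The reparametrization `g_a : Σ → Σ` of the Riemann sphere `Σ = OnePoint ℂ`
extending `z ↦ a · z` on `ℂ` and fixing the point at infinity. -/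
noncomputable def gA (a : ℂ) (ha : a ≠ 0) : C(OnePoint ℂ, OnePoint ℂ) where
  toFun := OnePoint.map (fun z => a * z)
  continuous_toFun := (Homeomorph.onePointCongr (Homeomorph.mulLeft₀ a ha)).continuous

/-- Reformulation (A) of the main properness theorem: for nonconstant maps `f₁, f₂` there are
product neighbourhoods such that the set of group elements carrying the first into the second
is contained in a compact subset of `ℂ* ⊂ ℂ`. -/
theorem group_part_precompact {M : Type*} [MetricSpace M] [CompactSpace M]
    (f₁ f₂ : C(OnePoint ℂ, M))
    (hf₁ : ∃ x y, f₁ x ≠ f₁ y) (hf₂ : ∃ x y, f₂ x ≠ f₂ y) :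
    ∃ ε₁ > 0, ∃ ε₂ > 0, ∃ K : Set ℂ, IsCompact K ∧ (0 : ℂ) ∉ K ∧
      {a : ℂ | ∃ ha : a ≠ 0, ∃ h : C(OnePoint ℂ, M),
        dist h f₁ < ε₁ ∧ dist (h.comp (gA a ha)) f₂ < ε₂} ⊆ K := by
  -- Step 1: find two *nonzero finite* points where `f₂` differs.
  obtain ⟨x, y, hxy⟩ := hf₂
  set δ : ℝ := dist (f₂ x) (f₂ y) with hδ
  have hδpos : 0 < δ := dist_pos.mpr hxy
  have hdense : Dense ((fun z : ℂ => (z : OnePoint ℂ)) '' {z : ℂ | z ≠ 0}) :=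
    OnePoint.denseRange_coe.dense_image OnePoint.continuous_coe (dense_compl_singleton 0)
  have hVx : IsOpen {w : OnePoint ℂ | dist (f₂ w) (f₂ x) < δ / 4} :=
    isOpen_lt (f₂.continuous.dist continuous_const) continuous_const
  have hVy : IsOpen {w : OnePoint ℂ | dist (f₂ w) (f₂ y) < δ / 4} :=
    isOpen_lt (f₂.continuous.dist continuous_const) continuous_const
  obtain ⟨_, hx'V, ⟨x', hx'ne, rfl⟩⟩ :=
    hdense.inter_open_nonempty _ hVx ⟨x, by simp [hδpos]⟩
  obtain ⟨_, hy'V, ⟨y', hy'ne, rfl⟩⟩ :=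
    hdense.inter_open_nonempty _ hVy ⟨y, by simp [hδpos]⟩
  simp only [Set.mem_setOf_eq] at hx'V hy'V
  set c : ℝ := dist (f₂ (x' : OnePoint ℂ)) (f₂ (y' : OnePoint ℂ)) with hc
  have hcpos : 0 < c := by
    have h4 := dist_triangle4 (f₂ x) (f₂ (x' : OnePoint ℂ)) (f₂ (y' : OnePoint ℂ)) (f₂ y)
    rw [dist_comm (f₂ x) (f₂ (x' : OnePoint ℂ))] at h4
    linarith
  -- Step 2: behaviour of `f₁` near `∞` and near `0`.
  have hinf : ∃ R : ℝ, 1 ≤ R ∧ ∀ z : ℂ, R < ‖z‖ → dist (f₁ (z : OnePoint ℂ)) (f₁ ∞) < c / 8 := by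
    have ht : Filter.Tendsto (fun z : ℂ => f₁ (z : OnePoint ℂ)) (Filter.coclosedCompact ℂ)
        (𝓝 (f₁ ∞)) := (f₁.continuous.tendsto ∞).comp OnePoint.tendsto_coe_infty
    have hmem : {z : ℂ | dist (f₁ (z : OnePoint ℂ)) (f₁ ∞) < c / 8} ∈
        Filter.coclosedCompact ℂ := by
      have := ht (Metric.ball_mem_nhds (f₁ ∞) (by positivity : (0:ℝ) < c / 8))
      exact this
    rw [Filter.coclosedCompact_eq_cocompact, Filter.mem_cocompact] at hmem
    obtain ⟨K, hK, hKs⟩ := hmem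
    obtain ⟨R, hR⟩ := hK.isBounded.subset_closedBall 0
    refine ⟨max R 1, le_max_right _ _, fun z hz => ?_⟩
    refine hKs fun hzK => ?_
    have h1 : ‖z‖ ≤ R := by simpa [dist_zero_right] using hR hzK
    have h2 : R ≤ max R 1 := le_max_left _ _
    linarith
  obtain ⟨R, hR1, hRfar⟩ := hinf
  have hzero : ∃ δ₀ : ℝ, 0 < δ₀ ∧ ∀ z : ℂ, ‖z‖ < δ₀ →
      dist (f₁ (z : OnePoint ℂ)) (f₁ ((0 : ℂ) : OnePoint ℂ)) < c / 8 := by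
    have hcont : ContinuousAt (fun z : ℂ => f₁ (z : OnePoint ℂ)) 0 :=
      (f₁.continuous.comp OnePoint.continuous_coe).continuousAt
    rw [Metric.continuousAt_iff] at hcont
    obtain ⟨δ₀, hδ₀, hd⟩ := hcont (c / 8) (by positivity)
    exact ⟨δ₀, hδ₀, fun z hz => hd (by simpa [dist_zero_right] using hz)⟩
  obtain ⟨δ₀, hδ₀pos, hnear⟩ := hzero
  -- Step 3: assemble the compact annulus.
  have hx'pos : 0 < ‖x'‖ := norm_pos_iff.mpr hx'ne
  have hy'pos : 0 < ‖y'‖ := norm_pos_iff.mpr hy'ne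
  set m : ℝ := min ‖x'‖ ‖y'‖ with hm
  set Mx : ℝ := max ‖x'‖ ‖y'‖ with hMx
  have hmpos : 0 < m := lt_min hx'pos hy'pos
  have hMxpos : 0 < Mx := lt_of_lt_of_le hx'pos (le_max_left _ _)
  refine ⟨c / 8, by positivity, c / 8, by positivity,
    Metric.closedBall 0 (R / m) \ Metric.ball 0 (δ₀ / Mx),
    (isCompact_closedBall 0 _).diff Metric.isOpen_ball,
    fun h0 => h0.2 (Metric.mem_ball_self (by positivity)), ?_⟩
  rintro a ⟨ha, h, hd1, hd2⟩
  -- pointwise estimate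
  have key : ∀ z : OnePoint ℂ, dist (f₂ z) (f₁ ((gA a ha) z)) < c / 4 := by
    intro z
    have h1 : dist (f₂ z) (h ((gA a ha) z)) ≤ dist (h.comp (gA a ha)) f₂ := by
      rw [dist_comm]
      exact ContinuousMap.dist_apply_le_dist (f := h.comp (gA a ha)) (g := f₂) z
    have h2 : dist (h ((gA a ha) z)) (f₁ ((gA a ha) z)) ≤ dist h f₁ :=
      ContinuousMap.dist_apply_le_dist _
    calc dist (f₂ z) (f₁ ((gA a ha) z))
        ≤ dist (f₂ z) (h ((gA a ha) z)) + dist (h ((gA a ha) z)) (f₁ ((gA a ha) z)) :=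
          dist_triangle _ _ _
      _ < c / 8 + c / 8 := by
          have := lt_of_le_of_lt h1 hd2
          have := lt_of_le_of_lt h2 hd1
          linarith
      _ = c / 4 := by ring
  have hgx : (gA a ha) (x' : OnePoint ℂ) = ((a * x' : ℂ) : OnePoint ℂ) := rfl
  have hgy : (gA a ha) (y' : OnePoint ℂ) = ((a * y' : ℂ) : OnePoint ℂ) := rfl
  have keyx := key (x' : OnePoint ℂ)
  have keyy := key (y' : OnePoint ℂ)
  rw [hgx] at keyx
  rw [hgy] at keyy
  -- upper bound on ‖a‖
  have hub : ‖a‖ ≤ R / m := by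
    by_contra hlt
    push_neg at hlt
    have hax : R < ‖a * x'‖ := by
      rw [norm_mul]
      calc R = (R / m) * m := by field_simp
        _ < ‖a‖ * m := by
            exact mul_lt_mul_of_pos_right hlt hmpos
        _ ≤ ‖a‖ * ‖x'‖ := by
            exact mul_le_mul_of_nonneg_left (min_le_left _ _) (norm_nonneg _)
    have hay : R < ‖a * y'‖ := by
      rw [norm_mul]
      calc R = (R / m) * m := by field_simp
        _ < ‖a‖ * m := mul_lt_mul_of_pos_right hlt hmpos
        _ ≤ ‖a‖ * ‖y'‖ := mul_le_mul_of_nonneg_left (min_le_right _ _) (norm_nonneg _)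
    have h1 := hRfar _ hax
    have h2 := hRfar _ hay
    have h4 := dist_triangle4 (f₂ (x' : OnePoint ℂ)) (f₁ ((a * x' : ℂ) : OnePoint ℂ))
      (f₁ ((a * y' : ℂ) : OnePoint ℂ)) (f₂ (y' : OnePoint ℂ))
    have h5 : dist (f₁ ((a * x' : ℂ) : OnePoint ℂ)) (f₁ ((a * y' : ℂ) : OnePoint ℂ)) ≤
        dist (f₁ ((a * x' : ℂ) : OnePoint ℂ)) (f₁ ∞) +
        dist (f₁ ∞) (f₁ ((a * y' : ℂ) : OnePoint ℂ)) := dist_triangle _ _ _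
    rw [dist_comm (f₁ ∞)] at h5
    have keyy' : dist (f₁ ((a * y' : ℂ) : OnePoint ℂ)) (f₂ (y' : OnePoint ℂ)) < c / 4 := by
      rw [dist_comm]; exact keyy
    rw [← hc] at h4
    linarith
  -- lower bound on ‖a‖
  have hlb : δ₀ / Mx ≤ ‖a‖ := by
    by_contra hlt
    push_neg at hlt
    have hax : ‖a * x'‖ < δ₀ := by
      rw [norm_mul]
      calc ‖a‖ * ‖x'‖ ≤ ‖a‖ * Mx :=
            mul_le_mul_of_nonneg_left (le_max_left _ _) (norm_nonneg _)
        _ < (δ₀ / Mx) * Mx := mul_lt_mul_of_pos_right hlt hMxpos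
        _ = δ₀ := by field_simp
    have hay : ‖a * y'‖ < δ₀ := by
      rw [norm_mul]
      calc ‖a‖ * ‖y'‖ ≤ ‖a‖ * Mx :=
            mul_le_mul_of_nonneg_left (le_max_right _ _) (norm_nonneg _)
        _ < (δ₀ / Mx) * Mx := mul_lt_mul_of_pos_right hlt hMxpos
        _ = δ₀ := by field_simp
    have h1 := hnear _ hax
    have h2 := hnear _ hay
    have h4 := dist_triangle4 (f₂ (x' : OnePoint ℂ)) (f₁ ((a * x' : ℂ) : OnePoint ℂ))
      (f₁ ((a * y' : ℂ) : OnePoint ℂ)) (f₂ (y' : OnePoint ℂ))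
    have h5 : dist (f₁ ((a * x' : ℂ) : OnePoint ℂ)) (f₁ ((a * y' : ℂ) : OnePoint ℂ)) ≤
        dist (f₁ ((a * x' : ℂ) : OnePoint ℂ)) (f₁ ((0:ℂ) : OnePoint ℂ)) +
        dist (f₁ ((0:ℂ) : OnePoint ℂ)) (f₁ ((a * y' : ℂ) : OnePoint ℂ)) := dist_triangle _ _ _
    rw [dist_comm (f₁ ((0:ℂ) : OnePoint ℂ))] at h5
    have keyy' : dist (f₁ ((a * y' : ℂ) : OnePoint ℂ)) (f₂ (y' : OnePoint ℂ)) < c / 4 := by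
      rw [dist_comm]; exact keyy
    rw [← hc] at h4
    linarith
  constructor
  · simpa [Metric.mem_closedBall, dist_zero_right] using hub
  · simp only [Metric.mem_ball, dist_zero_right, not_lt]
    exact hlb
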